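/- If a finite group H acts on the circle by orientation-preserving C¹ diffeomorphisms (i.e., there is a group homomorphism ρ from H into the homeomorphism group of ℝ/ℤ such that each ρ(h) is an orientation-preserving C¹ diffeomorphism of the circle), then the action of the commutator subgroup [H,H] is trivial: ρ(h) is the identity for every h ∈ [H,H]. -/

import Mathlib

/-- The group of self-homeomorphisms of a topological space, under composition
(`(f * g) x = f (g x)`). -/
instance homeomorphGroup (X : Type*) [TopologicalSpace X] : Group (X ≃ₜ X) where
  mul f g := g.trans f
  one := Homeomorph.refl X
  inv := Homeomorph.symm
  mul_assoc _ _ _ := rfl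
  one_mul _ := Homeomorph.ext fun _ => rfl
  mul_one _ := Homeomorph.ext fun _ => rfl
  inv_mul_cancel f := Homeomorph.ext f.symm_apply_apply

/-- A homeomorphism `g` of the circle `ℝ/ℤ` is an orientation-preserving `C¹`
diffeomorphism if it admits a lift `F : ℝ → ℝ` that is continuously differentiable
with everywhere strictly positive derivative, satisfies `F (x+1) = F x + 1`, and
satisfies `π ∘ F = g ∘ π` where `π : ℝ → ℝ/ℤ` is the natural projection. -/
def IsOrientationPreservingC1Diffeo (g : UnitAddCircle ≃ₜ UnitAddCircle) : Prop :=
  ∃ F : ℝ → ℝ, ContDiff ℝ 1 F ∧ (∀ x : ℝ, 0 < deriv F x) ∧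
    (∀ x : ℝ, F (x + 1) = F x + 1) ∧
    ∀ x : ℝ, ((F x : UnitAddCircle)) = g (x : UnitAddCircle)

lemma intValued_continuous_eq {f : ℝ → ℝ} (hf : Continuous f)
    (h : ∀ x, ∃ n : ℤ, f x = n) (a b : ℝ) : f a = f b := by
  by_contra hne
  obtain ⟨p, hp⟩ := h a
  obtain ⟨q, hq⟩ := h b
  have hpq : p ≠ q := by rintro rfl; exact hne (hp.trans hq.symm)
  have hmem : ((min p q : ℤ) : ℝ) + 1/2 ∈ Set.uIcc (f a) (f b) := by
    rw [Set.mem_uIcc, hp, hq]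
    rcases le_or_gt p q with hle | hlt
    · left
      rw [min_eq_left hle]
      have h1 : (p:ℝ) + 1 ≤ q := by exact_mod_cast (by omega : p + 1 ≤ q)
      constructor <;> linarith
    · right
      rw [min_eq_right hlt.le]
      have h1 : (q:ℝ) + 1 ≤ p := by exact_mod_cast (by omega : q + 1 ≤ p)
      constructor <;> linarith
  obtain ⟨x, -, hx⟩ := intermediate_value_uIcc (hf.continuousOn) hmem
  obtain ⟨n, hn⟩ := h x
  rw [hn] at hx
  have h2 : (2*n : ℝ) = 2 * ((min p q : ℤ) : ℝ) + 1 := by linarith [hx]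
  have h3 : 2*n = 2 * (min p q) + 1 := by exact_mod_cast h2
  omega

/-- If a finite group `H` acts on the circle `ℝ/ℤ` by
orientation-preserving `C¹` diffeomorphisms, then the commutator subgroup `[H,H]`
acts trivially. -/
theorem stmt7 (H : Type*) [Group H] [Finite H]
    (ρ : H →* (UnitAddCircle ≃ₜ UnitAddCircle))
    (hρ : ∀ h : H, IsOrientationPreservingC1Diffeo (ρ h)) :
    ∀ h ∈ commutator H, ρ h = 1 := by
  have : Fintype H := Fintype.ofFinite H
  set N := Fintype.card H with hNdef
  choose F hF1 hF2 hF3 hF4 using hρ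
  have hcont : ∀ h, Continuous (F h) := fun h => (hF1 h).continuous
  have hmono : ∀ h, StrictMono (F h) := fun h => strictMono_of_deriv_pos (hF2 h)
  -- integer translation equivariance
  have hint : ∀ (h : H) (x : ℝ) (n : ℤ), F h (x + n) = F h x + n := by
    intro h x n
    induction n using Int.induction_on with
    | zero => simp
    | succ k ih =>
        have : x + ((k:ℤ) + 1 : ℤ) = (x + (k:ℤ)) + 1 := by push_cast; ring
        rw [this, hF3, ih]; push_cast; ring
    | pred k ih =>
        have h1 := hF3 h (x + (-(k:ℤ) - 1 : ℤ))
        have h2 : (x + (-(k:ℤ) - 1 : ℤ)) + 1 = x + (-(k:ℤ) : ℤ) := by push_cast; ring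
        rw [h2, ih] at h1
        have h3 : x + (-(k:ℤ) - 1 : ℤ) = x + (-((k:ℤ)+1) : ℤ) := by push_cast; ring
        rw [h3] at h1
        push_cast at h1 ⊢
        ring_nf at h1 ⊢
        linarith
  -- F h ∘ F k is a lift of ρ (h * k), so differs from F (h*k) by a constant integer
  have key : ∀ h k : H, ∃ m : ℤ, ∀ x, F h (F k x) = F (h*k) x + m := by
    intro h k
    have hval : ∀ x : ℝ, ∃ n : ℤ, F h (F k x) - F (h*k) x = n := by
      intro x
      have e1 : ((F h (F k x) : ℝ) : UnitAddCircle) = ((F (h*k) x : ℝ) : UnitAddCircle) := by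
        rw [hF4, hF4, hF4, map_mul]
        rfl
      have e2 : ((F h (F k x) - F (h*k) x : ℝ) : UnitAddCircle) = 0 := by
        rw [QuotientAddGroup.mk_sub, e1, sub_self]
      obtain ⟨n, hn⟩ := (AddCircle.coe_eq_zero_iff _).mp e2
      exact ⟨n, by rw [← hn, zsmul_eq_mul, mul_one]⟩
    have hc : Continuous fun x => F h (F k x) - F (h*k) x :=
      ((hcont h).comp (hcont k)).sub (hcont (h*k))
    obtain ⟨m, hm⟩ := hval 0
    refine ⟨m, fun x => ?_⟩
    have h5 := intValued_continuous_eq hc hval x 0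
    linarith [hm, h5]
  choose m hm using key
  have NE : Nonempty H := One.instNonempty
  set Ψ : ℝ → ℝ := fun x => ∑ h : H, F h x with hΨdef
  have hΨmono : StrictMono Ψ := by
    intro a b hab
    exact Finset.sum_lt_sum_of_nonempty Finset.univ_nonempty fun h _ => hmono h hab
  have hΨint : ∀ (x : ℝ) (n : ℤ), Ψ (x + n) = Ψ x + N * n := by
    intro x n
    simp only [hΨdef, hint, Finset.sum_add_distrib, Finset.sum_const,
      Finset.card_univ, nsmul_eq_mul, hNdef]
  have keyM : ∀ k : H, ∀ x : ℝ, Ψ (F k x) = Ψ x + ∑ h : H, (m h k : ℝ) := by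
    intro k x
    calc Ψ (F k x) = ∑ h : H, (F (h*k) x + (m h k : ℝ)) := by
          simp only [hΨdef, hm]
      _ = (∑ h : H, F (h*k) x) + ∑ h : H, (m h k : ℝ) := Finset.sum_add_distrib
      _ = Ψ x + ∑ h : H, (m h k : ℝ) := by
          rw [hΨdef]
          congr 1
          exact Fintype.sum_equiv (Equiv.mulRight k) _ _ fun h => rfl
  set M : H → ℤ := fun k => ∑ h : H, m h k with hMdef
  have hM : ∀ (k : H) (x : ℝ), Ψ (F k x) = Ψ x + (M k : ℝ) := by
    intro k x
    rw [keyM k x, hMdef]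
    push_cast
    ring
  have hcocycle : ∀ k l : H, M (k * l) + (N : ℤ) * m k l = M k + M l := by
    intro k l
    have e1 : Ψ (F k (F l 0)) = Ψ 0 + (M l : ℝ) + (M k : ℝ) := by
      rw [hM k (F l 0), hM l 0]
    have e2 : Ψ (F k (F l 0)) = Ψ 0 + (M (k*l) : ℝ) + (N : ℝ) * (m k l : ℝ) := by
      rw [hm k l 0, hΨint (F (k*l) 0) (m k l), hM (k*l) 0]
    have e3 : ((M (k*l) + (N:ℤ) * m k l : ℤ) : ℝ) = ((M k + M l : ℤ) : ℝ) := by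
      push_cast
      linarith [e1, e2]
    exact_mod_cast e3
  -- the homomorphism H → ZMod N
  let χ : H →* Multiplicative (ZMod N) :=
    MonoidHom.mk' (fun k => Multiplicative.ofAdd ((M k : ZMod N))) (by
      intro a b
      have h2 : ((M (a*b) + (N:ℤ) * m a b : ℤ) : ZMod N) = ((M a + M b : ℤ) : ZMod N) := by
        rw [hcocycle a b]
      push_cast at h2
      rw [ZMod.natCast_self, zero_mul, add_zero] at h2
      show Multiplicative.ofAdd ((M (a*b) : ZMod N)) =
        Multiplicative.ofAdd ((M a : ZMod N)) * Multiplicative.ofAdd ((M b : ZMod N))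
      rw [← ofAdd_add, h2])
  intro h hcomm
  have hker : χ h = 1 := Abelianization.commutator_subset_ker χ hcomm
  have hzero : ((M h : ZMod N)) = 0 := by
    have : Multiplicative.toAdd (χ h) = Multiplicative.toAdd (1 : Multiplicative (ZMod N)) := by
      rw [hker]
    exact this
  obtain ⟨j, hj⟩ := (ZMod.intCast_zmod_eq_zero_iff_dvd _ _).mp hzero
  have hfix : ∀ x : ℝ, F h x = x + (j : ℝ) := by
    intro x
    have e1 : Ψ (F h x) = Ψ (x + (j : ℝ)) := by
      rw [hM h x, hΨint x j, hj]
      push_cast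
      ring
    exact hΨmono.injective e1
  refine Homeomorph.ext fun z => ?_
  induction z using QuotientAddGroup.induction_on with
  | H x =>
    show ρ h ((x : ℝ) : UnitAddCircle) = ((x : ℝ) : UnitAddCircle)
    rw [← hF4 h x, hfix x]
    rw [show ((x + (j:ℝ) : ℝ) : UnitAddCircle) = (x : UnitAddCircle) + ((j:ℝ) : UnitAddCircle) from
      QuotientAddGroup.mk_add _ _ _]
    have : (((j:ℝ)) : UnitAddCircle) = 0 := by
      rw [AddCircle.coe_eq_zero_iff]
      exact ⟨j, by rw [zsmul_eq_mul, mul_one]⟩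
    rw [this, add_zero]
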